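/- Let n ≥ 2 and let Φ₁, …, Φ_{n-1} be independent random variables uniformly distributed on [0, π/2]. Define the eigenvalues Λ_j = cos²(Φ_j)·∏_{i=1}^{j-1} sin²(Φ_i) for 1 ≤ j ≤ n−1 and Λ_n = ∏_{i=1}^{n-1} sin²(Φ_i), and the von Neumann entropy S_n = −∑_{j=1}^{n} Λ_j · ln Λ_j. Then the expectation satisfies E[S_n] = (ln 2 − 1/2)·(4 − 1/2^{n-3}) = (ln 2 − 1/2)·(4 − 2^{3-n}). -/

import Mathlib

open MeasureTheory Real

/-- The uniform probability measure on the interval `[0, π/2]`. -/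
noncomputable def uniformHalfPi : Measure ℝ :=
  ENNReal.ofReal (2 / Real.pi) • volume.restrict (Set.Icc 0 (Real.pi / 2))

/-- The eigenvalue `Λ` with 0-based index `j`:
`Λ_j(φ) = cos²(φ j) ∏_{i<j} sin²(φ i)`. -/
noncomputable def Lam (m : ℕ) (j : Fin m) (φ : Fin m → ℝ) : ℝ :=
  Real.cos (φ j) ^ 2 * ∏ i ∈ Finset.univ.filter (fun i : Fin m => i < j), Real.sin (φ i) ^ 2

section Aux
open intervalIntegral Set

lemma il_log01 : IntervalIntegrable Real.log volume 0 1 := by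
  have hrp : IntervalIntegrable (fun x : ℝ => 2 * x ^ (-(1:ℝ)/2)) volume 0 1 :=
    (intervalIntegrable_rpow' (by norm_num)).const_mul 2
  refine hrp.mono_fun' ?_ ?_
  · exact (Real.measurable_log.aestronglyMeasurable)
  · rw [uIoc_of_le (by norm_num : (0:ℝ) ≤ 1)]
    refine (ae_restrict_iff' measurableSet_Ioc).2 (Filter.Eventually.of_forall ?_)
    intro x hx
    have hx0 : 0 < x := hx.1
    have hx1 : x ≤ 1 := hx.2
    have hlog : Real.log x ≤ 0 := Real.log_nonpos hx0.le hx1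
    simp only []
    rw [Real.norm_eq_abs, abs_of_nonpos hlog]
    -- -log x = 2 * log (x ^ (-1/2))?  use log_rpow
    have h1 : -Real.log x = 2 * Real.log (x ^ (-(1:ℝ)/2)) := by
      rw [Real.log_rpow hx0]; ring
    have h2 : Real.log (x ^ (-(1:ℝ)/2)) ≤ x ^ (-(1:ℝ)/2) - 1 :=
      Real.log_le_sub_one_of_pos (Real.rpow_pos_of_pos hx0 _)
    have h3 : (0:ℝ) < x ^ (-(1:ℝ)/2) := Real.rpow_pos_of_pos hx0 _
    nlinarith

lemma il_log_c {c : ℝ} (hc : 0 < c) : IntervalIntegrable Real.log volume 0 c := by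
  rcases le_total c 1 with h | h
  · exact il_log01.mono_set (by rw [uIcc_of_le hc.le, uIcc_of_le zero_le_one]; exact Icc_subset_Icc le_rfl h)
  · exact il_log01.trans (intervalIntegrable_log (by rw [uIcc_of_le h]; simp))

lemma il_logsin : IntervalIntegrable (fun x => Real.log (Real.sin x)) volume 0 (π/2) := by
  have hpi : (0:ℝ) < π / 2 := by positivity
  have hb : IntervalIntegrable (fun x : ℝ => -Real.log x + Real.log (π/2)) volume 0 (π/2) :=
    (il_log_c hpi).neg.add (intervalIntegrable_const)
  refine hb.mono_fun' ?_ ?_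
  · exact (Real.measurable_log.comp Real.measurable_sin).aestronglyMeasurable
  · rw [uIoc_of_le hpi.le]
    refine (ae_restrict_iff' measurableSet_Ioc).2 (Filter.Eventually.of_forall ?_)
    intro x hx
    have hx0 : 0 < x := hx.1
    have hx2 : x ≤ π / 2 := hx.2
    have hsin0 : 0 < Real.sin x := Real.sin_pos_of_pos_of_lt_pi hx0 (by nlinarith [Real.pi_pos])
    have hsin1 : Real.sin x ≤ 1 := Real.sin_le_one x
    have hjordan : 2 / π * x ≤ Real.sin x := Real.mul_le_sin hx0.le hx2
    simp only []
    rw [Real.norm_eq_abs, abs_of_nonpos (Real.log_nonpos hsin0.le hsin1)]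
    have h1 : Real.log (2 / π * x) ≤ Real.log (Real.sin x) :=
      Real.log_le_log (by positivity) hjordan
    have h2 : Real.log (2 / π * x) = Real.log x - Real.log (π / 2) := by
      rw [Real.log_mul (by positivity) hx0.ne', Real.log_div (by norm_num) (Real.pi_ne_zero),
        Real.log_div Real.pi_ne_zero (by norm_num)]
      ring
    linarith

lemma il_logcos : IntervalIntegrable (fun x => Real.log (Real.cos x)) volume 0 (π/2) := by
  have h := il_logsin.comp_sub_left (π/2)
  simp only [sub_self, sub_zero] at h
  have h2 := h.symm
  refine h2.congr ?_
  intro x _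
  simp only [Real.sin_pi_div_two_sub]

lemma integral_logsin : ∫ x in (0:ℝ)..(π/2), Real.log (Real.sin x) = -(π/2) * Real.log 2 := by
  have hpi : (0:ℝ) < π/2 := by positivity
  set I := ∫ x in (0:ℝ)..(π/2), Real.log (Real.sin x) with hI
  have hcos : ∫ x in (0:ℝ)..(π/2), Real.log (Real.cos x) = I := by
    have h1 : ∫ x in (0:ℝ)..(π/2), Real.log (Real.cos x)
        = ∫ x in (0:ℝ)..(π/2), Real.log (Real.sin (π/2 - x)) := by
      refine intervalIntegral.integral_congr fun x _ => ?_
      rw [Real.sin_pi_div_two_sub]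
    have h2 := intervalIntegral.integral_comp_sub_left
      (a := 0) (b := π/2) (fun x => Real.log (Real.sin x)) (π/2)
    simp only [sub_self, sub_zero] at h2
    rw [h1, h2]
  have il2 : IntervalIntegrable (fun x => Real.log (Real.sin x)) volume (π/2) π := by
    have h := il_logsin.comp_sub_left π
    simp only [sub_zero] at h
    have h2 : π - π/2 = π/2 := by ring
    rw [h2] at h
    refine h.symm.congr (fun x _ => ?_)
    simp only [Real.sin_pi_sub]
  have hsecond : ∫ x in (π/2:ℝ)..π, Real.log (Real.sin x) = I := by
    have h2 := intervalIntegral.integral_comp_sub_left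
      (a := 0) (b := π/2) (fun x => Real.log (Real.sin x)) π
    simp only [sub_zero] at h2
    have h3 : π - π/2 = π/2 := by ring
    rw [h3] at h2
    rw [← h2]
    refine intervalIntegral.integral_congr fun x _ => ?_
    rw [Real.sin_pi_sub]
  have h2I : ∫ x in (0:ℝ)..π, Real.log (Real.sin x) = 2 * I := by
    rw [← intervalIntegral.integral_add_adjacent_intervals il_logsin il2, hsecond, ← hI]
    ring
  have hdouble : ∫ x in (0:ℝ)..(π/2), Real.log (Real.sin (2*x))
      = 2⁻¹ * ∫ x in (0:ℝ)..π, Real.log (Real.sin x) := by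
    have h := intervalIntegral.integral_comp_mul_left
      (a := 0) (b := π/2) (f := fun x => Real.log (Real.sin x)) (c := 2) two_ne_zero
    simp only [mul_zero] at h
    have h2 : (2:ℝ) * (π/2) = π := by ring
    rw [h2] at h
    simpa using h
  have hsplit : ∫ x in (0:ℝ)..(π/2), Real.log (Real.sin (2*x))
      = ∫ x in (0:ℝ)..(π/2), (Real.log 2 + Real.log (Real.sin x) + Real.log (Real.cos x)) := by
    refine intervalIntegral.integral_congr_ae ?_
    have hne : ∀ᵐ x : ℝ, x ≠ π/2 := by
      refine ae_iff.mpr ?_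
      simp [measure_singleton]
    filter_upwards [hne] with x hx hmem
    rw [uIoc_of_le hpi.le] at hmem
    have hx0 : 0 < x := hmem.1
    have hx2 : x < π/2 := lt_of_le_of_ne hmem.2 hx
    have hs : 0 < Real.sin x := Real.sin_pos_of_pos_of_lt_pi hx0 (by nlinarith [Real.pi_pos])
    have hc : 0 < Real.cos x := Real.cos_pos_of_mem_Ioo ⟨by linarith, hx2⟩
    rw [Real.sin_two_mul, Real.log_mul (by positivity) hc.ne',
      Real.log_mul (by norm_num) hs.ne']
  have hsum : ∫ x in (0:ℝ)..(π/2), (Real.log 2 + Real.log (Real.sin x) + Real.log (Real.cos x))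
      = (π/2) * Real.log 2 + I + I := by
    rw [intervalIntegral.integral_add (intervalIntegrable_const.add il_logsin) il_logcos,
      intervalIntegral.integral_add intervalIntegrable_const il_logsin,
      intervalIntegral.integral_const, hcos, ← hI]
    simp [smul_eq_mul]
  rw [hsplit, hsum, h2I] at hdouble
  linarith

lemma integral_cos2_logsin :
    ∫ x in (0:ℝ)..(π/2), Real.cos (2*x) * Real.log (Real.sin x) = -(π/4) := by
  have hpi : (0:ℝ) < π/2 := by positivity
  set G : ℝ → ℝ := fun x => Real.sin (2*x) * (1/2) * Real.log (Real.sin x) - x/2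
      - Real.sin (2*x)/4 with hG
  have hderiv : ∀ x ∈ Set.Ioo (0:ℝ) (π/2),
      HasDerivAt G (Real.cos (2*x) * Real.log (Real.sin x)) x := by
    intro x hx
    have hxpi : x < π := lt_trans hx.2 (by linarith [Real.pi_pos])
    have hs : 0 < Real.sin x := Real.sin_pos_of_pos_of_lt_pi hx.1 hxpi
    have h1 : HasDerivAt (fun x : ℝ => Real.sin (2*x)) (Real.cos (2*x) * 2) x := by
      simpa [Function.comp_def] using (Real.hasDerivAt_sin (2*x)).comp x ((hasDerivAt_id x).const_mul 2)
    have h2 : HasDerivAt (fun x : ℝ => Real.log (Real.sin x)) ((Real.sin x)⁻¹ * Real.cos x) x := by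
      simpa [Function.comp_def] using (Real.hasDerivAt_log hs.ne').comp x (Real.hasDerivAt_sin x)
    have h3 : HasDerivAt G
        (((Real.cos (2*x) * 2) * (1/2)) * Real.log (Real.sin x)
          + Real.sin (2*x) * (1/2) * ((Real.sin x)⁻¹ * Real.cos x) - 1/2 - (Real.cos (2*x) * 2)/4) x := by
      exact (((h1.mul_const (1/2)).mul h2).sub ((hasDerivAt_id x).div_const 2)).sub
        (h1.div_const 4)
    convert h3 using 1
    have hsin2 : Real.sin (2*x) = 2 * Real.sin x * Real.cos x := Real.sin_two_mul x
    have hcos2 : Real.cos (2*x) = 2 * Real.cos x ^ 2 - 1 := Real.cos_two_mul x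
    rw [hsin2, show 2 * Real.sin x * Real.cos x * (1/2) * ((Real.sin x)⁻¹ * Real.cos x)
      = (Real.sin x * (Real.sin x)⁻¹) * Real.cos x ^ 2 by ring, mul_inv_cancel₀ hs.ne', one_mul, hcos2]
    ring
  have hint : IntervalIntegrable (fun x => Real.cos (2*x) * Real.log (Real.sin x))
      volume 0 (π/2) := by
    refine il_logsin.continuousOn_mul ?_
    exact (Real.continuous_cos.comp (continuous_const.mul continuous_id)).continuousOn
  have ha : Filter.Tendsto G (nhdsWithin 0 (Set.Ioi 0)) (nhds 0) := by
    have h1 : Filter.Tendsto (fun x : ℝ => Real.sin x * Real.log (Real.sin x))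
        (nhdsWithin 0 (Set.Ioi 0)) (nhds 0) := by
      have hc : Filter.Tendsto (fun t : ℝ => t * Real.log t) (nhds 0) (nhds 0) := by
        have := (Real.continuous_mul_log).tendsto 0
        simpa using this
      have hsin : Filter.Tendsto Real.sin (nhdsWithin 0 (Set.Ioi 0)) (nhds 0) := by
        simpa using (Real.continuous_sin.tendsto 0).mono_left nhdsWithin_le_nhds
      simpa [Function.comp_def] using hc.comp (by simpa using hsin)
    have h2 : Filter.Tendsto G (nhdsWithin 0 (Set.Ioi 0))
        (nhds ((1*1)*0 - 0/2 - 0/4)) := by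
      apply Filter.Tendsto.sub
      apply Filter.Tendsto.sub
      · -- (1/2) sin(2x) log sin x = cos x * (sin x log sin x)
        have heq : ∀ x : ℝ, Real.sin (2*x) * (1/2) * Real.log (Real.sin x)
            = Real.cos x * (Real.sin x * Real.log (Real.sin x)) := by
          intro x; rw [Real.sin_two_mul]; ring
        simp only [hG, heq]
        have hcos : Filter.Tendsto (fun x : ℝ => Real.cos x) (nhdsWithin 0 (Set.Ioi 0))
            (nhds 1) := by
          simpa using (Real.continuous_cos.tendsto 0).mono_left nhdsWithin_le_nhds
        simpa using hcos.mul h1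
      · simpa using (((continuous_id : Continuous fun x : ℝ => x).div_const 2).tendsto 0).mono_left
          (nhdsWithin_le_nhds (s := Set.Ioi (0:ℝ)))
      · have : Filter.Tendsto (fun x : ℝ => Real.sin (2*x)/4) (nhds 0) (nhds (Real.sin (2*0)/4)) :=
          ((Real.continuous_sin.comp (continuous_const.mul continuous_id)).div_const 4).tendsto 0
        simpa using this.mono_left nhdsWithin_le_nhds
    simpa using h2
  have hb : Filter.Tendsto G (nhdsWithin (π/2) (Set.Iio (π/2))) (nhds (-(π/4))) := by
    have hGcont : ContinuousAt G (π/2) := by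
      have hs : Real.sin (π/2) ≠ 0 := by rw [Real.sin_pi_div_two]; norm_num
      apply ContinuousAt.sub
      apply ContinuousAt.sub
      · exact ((((Real.continuous_sin.comp
          (continuous_const.mul continuous_id)).continuousAt).mul continuousAt_const).mul
          ((Real.continuousAt_log hs).comp Real.continuous_sin.continuousAt))
      · exact (continuous_id.div_const 2).continuousAt
      · exact ((Real.continuous_sin.comp (continuous_const.mul continuous_id)).div_const 4).continuousAt
    have hval : G (π/2) = -(π/4) := by
      simp only [hG]
      have : (2:ℝ) * (π/2) = π := by ring
      rw [this, Real.sin_pi]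
      ring
    rw [← hval]
    exact hGcont.continuousWithinAt.tendsto
  have := intervalIntegral.integral_eq_sub_of_hasDerivAt_of_tendsto hpi hderiv hint ha hb
  rw [this]; ring

lemma integral_sin2_logsin2 :
    ∫ x in (0:ℝ)..(π/2), Real.sin x ^ 2 * Real.log (Real.sin x ^ 2)
      = π/4 - (π/2) * Real.log 2 := by
  have h1 : ∀ x : ℝ, Real.sin x ^ 2 * Real.log (Real.sin x ^ 2)
      = Real.log (Real.sin x) - Real.cos (2*x) * Real.log (Real.sin x) := by
    intro x
    have : Real.log (Real.sin x ^ 2) = 2 * Real.log (Real.sin x) := by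
      rw [Real.log_pow]; norm_num
    rw [this, Real.cos_two_mul]
    linear_combination 2 * Real.log (Real.sin x) * Real.sin_sq_add_cos_sq x
  have hint : IntervalIntegrable (fun x => Real.cos (2*x) * Real.log (Real.sin x))
      volume 0 (π/2) := by
    refine il_logsin.continuousOn_mul ?_
    exact (Real.continuous_cos.comp (continuous_const.mul continuous_id)).continuousOn
  calc ∫ x in (0:ℝ)..(π/2), Real.sin x ^ 2 * Real.log (Real.sin x ^ 2)
      = ∫ x in (0:ℝ)..(π/2),
          (Real.log (Real.sin x) - Real.cos (2*x) * Real.log (Real.sin x)) := by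
        exact intervalIntegral.integral_congr fun x _ => h1 x
    _ = (∫ x in (0:ℝ)..(π/2), Real.log (Real.sin x))
        - ∫ x in (0:ℝ)..(π/2), Real.cos (2*x) * Real.log (Real.sin x) :=
        intervalIntegral.integral_sub il_logsin hint
    _ = π/4 - (π/2) * Real.log 2 := by
        rw [integral_logsin, integral_cos2_logsin]; ring

lemma integral_cos2_logcos2 :
    ∫ x in (0:ℝ)..(π/2), Real.cos x ^ 2 * Real.log (Real.cos x ^ 2)
      = π/4 - (π/2) * Real.log 2 := by
  have h1 : ∫ x in (0:ℝ)..(π/2), Real.cos x ^ 2 * Real.log (Real.cos x ^ 2)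
      = ∫ x in (0:ℝ)..(π/2), Real.sin (π/2 - x) ^ 2 * Real.log (Real.sin (π/2 - x) ^ 2) := by
    refine intervalIntegral.integral_congr fun x _ => ?_
    rw [Real.sin_pi_div_two_sub]
  have h2 := intervalIntegral.integral_comp_sub_left
    (a := 0) (b := π/2) (fun x => Real.sin x ^ 2 * Real.log (Real.sin x ^ 2)) (π/2)
  simp only [sub_self, sub_zero] at h2
  rw [h1, h2, integral_sin2_logsin2]

lemma uniform_integral (f : ℝ → ℝ) :
    ∫ x, f x ∂uniformHalfPi = (2/π) * ∫ x in (0:ℝ)..(π/2), f x := by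
  have hpi : (0:ℝ) < π/2 := by positivity
  rw [uniformHalfPi, MeasureTheory.integral_smul_measure, ENNReal.toReal_ofReal (by positivity)]
  rw [intervalIntegral.integral_of_le hpi.le]
  rw [MeasureTheory.integral_Icc_eq_integral_Ioc]
  simp [smul_eq_mul]

instance : IsProbabilityMeasure uniformHalfPi := by
  constructor
  rw [uniformHalfPi]
  rw [Measure.smul_apply, Measure.restrict_apply MeasurableSet.univ, Set.univ_inter,
    Real.volume_Icc, smul_eq_mul, ← ENNReal.ofReal_mul (by positivity)]
  rw [show (2/π) * (π/2 - 0) = 1 by field_simp; ring]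
  simp

lemma mul_log_bound {x : ℝ} (h0 : 0 ≤ x) (h1 : x ≤ 1) : |x * Real.log x| ≤ 1 := by
  rcases eq_or_lt_of_le h0 with h | h
  · simp [← h]
  · rw [mul_comm]
    exact (Real.abs_log_mul_self_lt x h h1).le

lemma integrable_of_bound {X : Type*} [MeasurableSpace X] {μ : Measure X} [IsFiniteMeasure μ]
    {f : X → ℝ} (hm : AEStronglyMeasurable f μ) (C : ℝ) (hC : ∀ x, |f x| ≤ C) :
    Integrable f μ :=
  (integrable_const C).mono' hm (Filter.Eventually.of_forall (by simpa [Real.norm_eq_abs] using hC))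

noncomputable def hent (x : ℝ) : ℝ :=
  -(Real.cos x ^ 2 * Real.log (Real.cos x ^ 2) + Real.sin x ^ 2 * Real.log (Real.sin x ^ 2))

lemma hent_continuous : Continuous hent := by
  unfold hent
  have h1 : Continuous fun x : ℝ => Real.cos x ^ 2 := (Real.continuous_cos.pow 2)
  have h2 : Continuous fun x : ℝ => Real.sin x ^ 2 := (Real.continuous_sin.pow 2)
  exact ((Real.continuous_mul_log.comp h1).add (Real.continuous_mul_log.comp h2)).neg

lemma hent_bound (x : ℝ) : |hent x| ≤ 2 := by
  unfold hent
  have h1 : |Real.cos x ^ 2 * Real.log (Real.cos x ^ 2)| ≤ 1 :=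
    mul_log_bound (sq_nonneg _) (by nlinarith [Real.neg_one_le_cos x, Real.cos_le_one x])
  have h2 : |Real.sin x ^ 2 * Real.log (Real.sin x ^ 2)| ≤ 1 :=
    mul_log_bound (sq_nonneg _) (by nlinarith [Real.neg_one_le_sin x, Real.sin_le_one x])
  rw [abs_neg]
  calc |Real.cos x ^ 2 * Real.log (Real.cos x ^ 2) + Real.sin x ^ 2 * Real.log (Real.sin x ^ 2)|
      ≤ _ + _ := abs_add_le _ _
    _ ≤ 2 := by linarith

lemma exp_hent : ∫ x, hent x ∂uniformHalfPi = 2 * Real.log 2 - 1 := by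
  rw [uniform_integral]
  have hi1 : IntervalIntegrable (fun x => Real.cos x ^ 2 * Real.log (Real.cos x ^ 2))
      volume 0 (π/2) :=
    (Real.continuous_mul_log.comp (Real.continuous_cos.pow 2)).intervalIntegrable _ _
  have hi2 : IntervalIntegrable (fun x => Real.sin x ^ 2 * Real.log (Real.sin x ^ 2))
      volume 0 (π/2) :=
    (Real.continuous_mul_log.comp (Real.continuous_sin.pow 2)).intervalIntegrable _ _
  have : ∫ x in (0:ℝ)..(π/2), hent x
      = -((∫ x in (0:ℝ)..(π/2), Real.cos x ^ 2 * Real.log (Real.cos x ^ 2))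
        + ∫ x in (0:ℝ)..(π/2), Real.sin x ^ 2 * Real.log (Real.sin x ^ 2)) := by
    rw [← intervalIntegral.integral_add hi1 hi2, ← intervalIntegral.integral_neg]
    rfl
  rw [this, integral_cos2_logcos2, integral_sin2_logsin2]
  have hπ : π ≠ 0 := Real.pi_ne_zero
  field_simp
  ring
lemma exp_sin_sq : ∫ x, Real.sin x ^ 2 ∂uniformHalfPi = 1/2 := by
  rw [uniform_integral, integral_sin_sq]
  have hπ : π ≠ 0 := Real.pi_ne_zero
  rw [Real.sin_zero, Real.cos_pi_div_two, Real.sin_pi_div_two]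
  field_simp
  ring

noncomputable def entF (m : ℕ) (φ : Fin m → ℝ) : ℝ :=
  -((∑ j : Fin m, Lam m j φ * Real.log (Lam m j φ)) +
    (∏ i, Real.sin (φ i) ^ 2) * Real.log (∏ i, Real.sin (φ i) ^ 2))

lemma Lam_zero (m : ℕ) (x : ℝ) (ψ : Fin m → ℝ) :
    Lam (m+1) 0 (Fin.cons x ψ) = Real.cos x ^ 2 := by
  have : (Finset.univ.filter (fun i : Fin (m+1) => i < 0)) = ∅ := by
    apply Finset.filter_false_of_mem
    intro i _
    exact Fin.not_lt_zero i
  simp [Lam, this]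

lemma Lam_succ (m : ℕ) (j : Fin m) (x : ℝ) (ψ : Fin m → ℝ) :
    Lam (m+1) j.succ (Fin.cons x ψ) = Real.sin x ^ 2 * Lam m j ψ := by
  unfold Lam
  rw [Finset.prod_filter, Finset.prod_filter, Fin.prod_univ_succ]
  simp only [Fin.cons_zero, Fin.cons_succ, Fin.succ_pos, if_true, Fin.succ_lt_succ_iff]
  ring

lemma prod_cons (m : ℕ) (x : ℝ) (ψ : Fin m → ℝ) :
    ∏ i : Fin (m+1), Real.sin ((Fin.cons x ψ : Fin (m+1) → ℝ) i) ^ 2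
      = Real.sin x ^ 2 * ∏ i : Fin m, Real.sin (ψ i) ^ 2 := by
  rw [Fin.prod_univ_succ]
  simp

lemma sum_Lam_add_prod (m : ℕ) (ψ : Fin m → ℝ) :
    (∑ j : Fin m, Lam m j ψ) + ∏ i : Fin m, Real.sin (ψ i) ^ 2 = 1 := by
  induction m with
  | zero => simp [Lam]
  | succ m ih =>
    rw [← Fin.cons_self_tail ψ, Fin.sum_univ_succ, Lam_zero, prod_cons]
    simp only [Lam_succ]
    rw [← Finset.mul_sum]
    have := ih (Fin.tail ψ)
    nlinarith [Real.sin_sq_add_cos_sq (ψ 0), this]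

lemma entF_cons (m : ℕ) (x : ℝ) (ψ : Fin m → ℝ) :
    entF (m+1) (Fin.cons x ψ) = hent x + Real.sin x ^ 2 * entF m ψ := by
  unfold entF hent
  rw [Fin.sum_univ_succ, Lam_zero, prod_cons]
  simp only [Lam_succ]
  set s := Real.sin x ^ 2 with hs
  set P := ∏ i : Fin m, Real.sin (ψ i) ^ 2 with hP
  rcases eq_or_ne s 0 with h0 | h0
  · simp [h0]
  · have hterm : ∀ L : ℝ, s * L * Real.log (s * L)
        = s * L * Real.log s + s * (L * Real.log L) := by
      intro L
      rcases eq_or_ne L 0 with h | h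
      · simp [h]
      · rw [Real.log_mul h0 h]; ring
    have hsum : ∑ j : Fin m, (s * Lam m j ψ) * Real.log (s * Lam m j ψ)
        = s * Real.log s * (∑ j : Fin m, Lam m j ψ)
          + s * ∑ j : Fin m, Lam m j ψ * Real.log (Lam m j ψ) := by
      rw [Finset.mul_sum, Finset.mul_sum, ← Finset.sum_add_distrib]
      exact Finset.sum_congr rfl fun j _ => by rw [hterm]; ring
    rw [hsum, hterm P]
    have hid := sum_Lam_add_prod m ψ
    linear_combination (-(s * Real.log s)) * hid

lemma Lam_continuous (m : ℕ) (j : Fin m) : Continuous fun φ => Lam m j φ := by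
  unfold Lam
  exact ((Real.continuous_cos.comp (continuous_apply j)).pow 2).mul
    (continuous_finset_prod _ fun i _ => (Real.continuous_sin.comp (continuous_apply i)).pow 2)

lemma Lam_nonneg (m : ℕ) (j : Fin m) (φ : Fin m → ℝ) : 0 ≤ Lam m j φ :=
  mul_nonneg (sq_nonneg _) (Finset.prod_nonneg fun i _ => sq_nonneg _)

lemma Lam_le_one (m : ℕ) (j : Fin m) (φ : Fin m → ℝ) : Lam m j φ ≤ 1 :=
  mul_le_one₀ (Real.cos_sq_le_one _)
    (Finset.prod_nonneg fun i _ => sq_nonneg _)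
    (Finset.prod_le_one (fun i _ => sq_nonneg _) (fun i _ => Real.sin_sq_le_one _))

lemma prod_sin_sq_nonneg (m : ℕ) (φ : Fin m → ℝ) : 0 ≤ ∏ i : Fin m, Real.sin (φ i) ^ 2 :=
  Finset.prod_nonneg fun i _ => sq_nonneg _

lemma prod_sin_sq_le_one (m : ℕ) (φ : Fin m → ℝ) : ∏ i : Fin m, Real.sin (φ i) ^ 2 ≤ 1 :=
  Finset.prod_le_one (fun i _ => sq_nonneg _) (fun i _ => Real.sin_sq_le_one _)

lemma entF_continuous (m : ℕ) : Continuous (entF m) := by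
  unfold entF
  have h1 : Continuous fun φ : Fin m → ℝ => ∏ i, Real.sin (φ i) ^ 2 :=
    continuous_finset_prod _ fun i _ => (Real.continuous_sin.comp (continuous_apply i)).pow 2
  exact ((continuous_finset_sum _ fun j _ =>
    Real.continuous_mul_log.comp (Lam_continuous m j)).add
    (Real.continuous_mul_log.comp h1)).neg

lemma entF_bound (m : ℕ) (φ : Fin m → ℝ) : |entF m φ| ≤ m + 1 := by
  unfold entF
  rw [abs_neg]
  have h1 : |∑ j : Fin m, Lam m j φ * Real.log (Lam m j φ)| ≤ m := by
    calc |∑ j : Fin m, Lam m j φ * Real.log (Lam m j φ)|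
        ≤ ∑ j : Fin m, |Lam m j φ * Real.log (Lam m j φ)| := Finset.abs_sum_le_sum_abs _ _
      _ ≤ ∑ _j : Fin m, (1:ℝ) := Finset.sum_le_sum fun j _ =>
          mul_log_bound (Lam_nonneg m j φ) (Lam_le_one m j φ)
      _ = m := by simp
  have h2 : |(∏ i, Real.sin (φ i) ^ 2) * Real.log (∏ i, Real.sin (φ i) ^ 2)| ≤ 1 :=
    mul_log_bound (prod_sin_sq_nonneg m φ) (prod_sin_sq_le_one m φ)
  calc |(∑ j : Fin m, Lam m j φ * Real.log (Lam m j φ))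
        + (∏ i, Real.sin (φ i) ^ 2) * Real.log (∏ i, Real.sin (φ i) ^ 2)|
      ≤ _ + _ := abs_add_le _ _
    _ ≤ m + 1 := by linarith

lemma cons_eq_symm (m : ℕ) (p : ℝ × (Fin m → ℝ)) :
    (MeasurableEquiv.piFinSuccAbove (fun _ : Fin (m+1) => ℝ) 0).symm p = Fin.cons p.1 p.2 := by
  funext i
  refine Fin.cases ?_ (fun j => ?_) i
  · simp [MeasurableEquiv.piFinSuccAbove]
  · simp [MeasurableEquiv.piFinSuccAbove, Fin.insertNthEquiv]

lemma main_integral (m : ℕ) :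
    ∫ φ : Fin m → ℝ, entF m φ ∂(Measure.pi fun _ : Fin m => uniformHalfPi)
      = (Real.log 2 - 1/2) * (4 - (2:ℝ) ^ ((2:ℤ) - (m:ℤ))) := by
  induction m with
  | zero =>
    have h0 : entF 0 = fun _ => 0 := by
      funext φ
      simp [entF]
    rw [h0]
    norm_num
  | succ m ih =>
    have hmp := (MeasureTheory.measurePreserving_piFinSuccAbove
      (fun _ : Fin (m+1) => uniformHalfPi) 0).symm
      (MeasurableEquiv.piFinSuccAbove (fun _ : Fin (m+1) => ℝ) 0)
    have hemb := (MeasurableEquiv.piFinSuccAbove (fun _ : Fin (m+1) => ℝ) 0).symm.measurableEmbedding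
    have hstep1 : ∫ φ : Fin (m+1) → ℝ, entF (m+1) φ
          ∂(Measure.pi fun _ : Fin (m+1) => uniformHalfPi)
        = ∫ p : ℝ × (Fin m → ℝ), entF (m+1) (Fin.cons p.1 p.2)
          ∂(uniformHalfPi.prod (Measure.pi fun _ : Fin m => uniformHalfPi)) := by
      rw [← hmp.integral_comp hemb (entF (m+1))]
      refine integral_congr_ae (Filter.Eventually.of_forall fun p => ?_)
      simp only [cons_eq_symm]
    have hint2 : Integrable (fun p : ℝ × (Fin m → ℝ) => hent p.1 + Real.sin p.1 ^ 2 * entF m p.2)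
        (uniformHalfPi.prod (Measure.pi fun _ : Fin m => uniformHalfPi)) := by
      refine integrable_of_bound ?_ (2 + (m+1)) ?_
      · refine Continuous.aestronglyMeasurable ?_
        exact (hent_continuous.comp continuous_fst).add
          (((Real.continuous_sin.comp continuous_fst).pow 2).mul
            ((entF_continuous m).comp continuous_snd))
      · intro p
        have h1 := hent_bound p.1
        have h2 := entF_bound m p.2
        have h3 : Real.sin p.1 ^ 2 ≤ 1 := Real.sin_sq_le_one _
        have h4 : (0:ℝ) ≤ Real.sin p.1 ^ 2 := sq_nonneg _
        calc |hent p.1 + Real.sin p.1 ^ 2 * entF m p.2|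
            ≤ |hent p.1| + |Real.sin p.1 ^ 2 * entF m p.2| := abs_add_le _ _
          _ ≤ 2 + (m+1) := by
              rw [abs_mul, abs_of_nonneg h4]
              nlinarith [abs_nonneg (entF m p.2)]
    have hstep2 : ∫ p : ℝ × (Fin m → ℝ), entF (m+1) (Fin.cons p.1 p.2)
          ∂(uniformHalfPi.prod (Measure.pi fun _ : Fin m => uniformHalfPi))
        = ∫ x : ℝ, ∫ ψ : Fin m → ℝ, (hent x + Real.sin x ^ 2 * entF m ψ)
          ∂(Measure.pi fun _ : Fin m => uniformHalfPi) ∂uniformHalfPi := by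
      rw [show (fun p : ℝ × (Fin m → ℝ) => entF (m+1) (Fin.cons p.1 p.2))
          = fun p : ℝ × (Fin m → ℝ) => hent p.1 + Real.sin p.1 ^ 2 * entF m p.2 from
        funext fun p => entF_cons m p.1 p.2]
      exact MeasureTheory.integral_prod _ hint2
    have hintF : Integrable (entF m) (Measure.pi fun _ : Fin m => uniformHalfPi) :=
      integrable_of_bound (entF_continuous m).aestronglyMeasurable (m+1) (entF_bound m)
    have hinner : ∀ x : ℝ, ∫ ψ : Fin m → ℝ, (hent x + Real.sin x ^ 2 * entF m ψ)
          ∂(Measure.pi fun _ : Fin m => uniformHalfPi)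
        = hent x + Real.sin x ^ 2
            * ∫ ψ : Fin m → ℝ, entF m ψ ∂(Measure.pi fun _ : Fin m => uniformHalfPi) := by
      intro x
      rw [integral_add (integrable_const _) (hintF.const_mul _),
        MeasureTheory.integral_const, MeasureTheory.integral_const_mul]
      simp
    have hhent : Integrable hent uniformHalfPi :=
      integrable_of_bound hent_continuous.aestronglyMeasurable 2 hent_bound
    have hsin2 : Integrable (fun x => Real.sin x ^ 2) uniformHalfPi :=
      integrable_of_bound ((Real.continuous_sin.pow 2)).aestronglyMeasurable 1
        (fun x => by rw [abs_of_nonneg (sq_nonneg _)]; exact Real.sin_sq_le_one x)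
    rw [hstep1, hstep2]
    simp only [hinner, ih]
    rw [integral_add hhent (hsin2.mul_const _), MeasureTheory.integral_mul_const, exp_hent,
      exp_sin_sq]
    have hpow : (2:ℝ) ^ ((2:ℤ) - ((m:ℤ)+1)) = (2:ℝ) ^ ((2:ℤ) - (m:ℤ)) / 2 := by
      rw [show (2:ℤ) - ((m:ℤ)+1) = ((2:ℤ) - (m:ℤ)) - 1 by ring, zpow_sub₀ (by norm_num)]
      norm_num
    push_cast
    rw [hpow]
    ring

end Aux

/-- With independent `Φ_i` uniform on `[0, π/2]`, eigenvalues
`Λ_j = cos²(Φ_j) ∏_{i<j} sin²(Φ_i)` for `j = 1, …, n-1` and `Λ_n = ∏_i sin²(Φ_i)`,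
the von Neumann entropy `S_n = −∑_{j=1}^n Λ_j ln Λ_j` has expectation
`E[S_n] = (ln 2 − 1/2)(4 − 2^{3−n})`. -/
theorem stmt_14 (n : ℕ) (hn : 2 ≤ n) :
    ∫ φ : Fin (n - 1) → ℝ,
        -((∑ j : Fin (n - 1), Lam (n - 1) j φ * Real.log (Lam (n - 1) j φ)) +
          (∏ i, Real.sin (φ i) ^ 2) * Real.log (∏ i, Real.sin (φ i) ^ 2))
      ∂(Measure.pi fun _ : Fin (n - 1) => uniformHalfPi)
      = (Real.log 2 - 1 / 2) * (4 - (2 : ℝ) ^ ((3 : ℤ) - (n : ℤ))) := by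
  have h := main_integral (n - 1)
  have hc : ((n - 1 : ℕ) : ℤ) = (n : ℤ) - 1 := by
    have h1 : (1:ℕ) ≤ n := by omega
    push_cast [h1]
    ring
  rw [show (2:ℤ) - ((n-1:ℕ):ℤ) = 3 - (n:ℤ) by rw [hc]; ring] at h
  exact h
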